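/- Let n ≥ 1, 1 ≤ k ≤ n, let r₀₀, r₁, …, r_n be real numbers and x = (x₁,…,x_n) ∈ ℝ^n. Then the degree-(k+1) real polynomial p_{k+1}(t) = (r₀₀ + t) σ_k(r+tI) − Σ_{i=1}^n q_{i,k}(t) x_i² has only real roots, i.e. it splits over ℝ (has k+1 real roots counted with multiplicity). -/

import Mathlib

open Polynomial

/-- `σ_m(r+tI) = Σ_{1≤i₁<…<i_m≤n} (t+r_{i₁})⋯(t+r_{i_m})` as a real polynomial in `t`. -/
noncomputable def sigmaTP (n : ℕ) (r : Fin n → ℝ) (m : ℕ) : Polynomial ℝ :=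
  ∑ s ∈ Finset.powersetCard m (Finset.univ : Finset (Fin n)),
    ∏ i ∈ s, (X + C (r i))

/-- `q_{i,k}(t) = Σ_{j=0}^{k−1} (−1)^j σ_{k−1−j}(r+tI) (t+r_i)^j`. -/
noncomputable def qPoly (n : ℕ) (r : Fin n → ℝ) (i : Fin n) (k : ℕ) : Polynomial ℝ :=
  ∑ j ∈ Finset.range k, ((-1 : ℝ) ^ j) • (sigmaTP n r (k - 1 - j) * (X + C (r i)) ^ j)

/-- `p_{k+1}(t) = (r₀₀ + t) σ_k(r+tI) − Σ_{i=1}^n q_{i,k}(t) x_i²`. -/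
noncomputable def pPoly (n k : ℕ) (r₀₀ : ℝ) (r : Fin n → ℝ) (x : Fin n → ℝ) :
    Polynomial ℝ :=
  (X + C r₀₀) * sigmaTP n r k - ∑ i : Fin n, ((x i) ^ 2) • qPoly n r i k

/-- `π_n(t) = (t+r₁)⋯(t+r_n)`. -/
noncomputable def piN (n : ℕ) (r : Fin n → ℝ) : Polynomial ℝ :=
  ∏ i : Fin n, (X + C (r i))

/-- `π_{i,n}(t) = ∏_{j≠i} (t+r_j)`. -/
noncomputable def piIN (n : ℕ) (r : Fin n → ℝ) (i : Fin n) : Polynomial ℝ :=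
  ∏ j ∈ Finset.univ.erase i, (X + C (r j))


open Polynomial

section Sig
variable {R : Type*} [CommRing R] {n : ℕ} (r : Fin n → R)

noncomputable def sigS (S : Finset (Fin n)) (m : ℕ) : Polynomial R :=
  ∑ T ∈ Finset.powersetCard m S, ∏ i ∈ T, (X + C (r i))

lemma derivative_finset_prod {ι : Type*} [DecidableEq ι] (s : Finset ι) (f : ι → R[X]) :
    derivative (∏ i ∈ s, f i) = ∑ i ∈ s, (∏ j ∈ s.erase i, f j) * derivative (f i) := by
  classical
  induction s using Finset.induction with
  | empty => simp
  | @insert a s ha ih =>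
    rw [Finset.prod_insert ha, derivative_mul, ih, Finset.sum_insert ha,
      Finset.erase_insert ha, mul_comm (derivative (f a)), Finset.mul_sum]
    congr 1
    exact Finset.sum_congr rfl fun i hi => by
      have h2 : (insert a s).erase i = insert a (s.erase i) :=
        Finset.erase_insert_of_ne (fun h => ha (h ▸ hi))
      rw [h2, Finset.prod_insert (fun h => ha (Finset.mem_of_mem_erase h)), mul_assoc]

lemma derivative_sigS (S : Finset (Fin n)) (m : ℕ) :
    derivative (sigS r S (m + 1)) = (S.card - m) • sigS r S m := by
  classical
  unfold sigS
  rw [derivative_sum]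
  have h1 : ∀ T ∈ Finset.powersetCard (m+1) S,
      derivative (∏ i ∈ T, (X + C (r i))) = ∑ i ∈ T, ∏ j ∈ T.erase i, (X + C (r j)) := by
    intro T _
    rw [derivative_finset_prod]
    simp
  rw [Finset.sum_congr rfl h1]
  rw [Finset.sum_sigma']
  have h2 : (S.card - m) • ∑ T ∈ Finset.powersetCard m S, ∏ i ∈ T, (X + C (r i))
      = ∑ p ∈ (Finset.powersetCard m S).sigma (fun T => S \ T), ∏ j ∈ p.1, (X + C (r j)) := by
    rw [Finset.sum_sigma, Finset.smul_sum]
    refine Finset.sum_congr rfl fun T hT => ?_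
    obtain ⟨hsub, hcard⟩ := Finset.mem_powersetCard.mp hT
    have : ∀ s ∈ S \ T, (∏ j ∈ (⟨T, s⟩ : Σ _ : Finset (Fin n), Fin n).1, (X + C (r j) : R[X]))
        = ∏ i ∈ T, (X + C (r i)) := fun s _ => rfl
    rw [Finset.sum_congr rfl this, Finset.sum_const, Finset.card_sdiff_of_subset hsub, hcard]
  rw [h2]
  refine Finset.sum_nbij' (fun p => ⟨p.1.erase p.2, p.2⟩) (fun p => ⟨insert p.2 p.1, p.2⟩)
    ?_ ?_ ?_ ?_ ?_
  · rintro ⟨T, i⟩ hp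
    rw [Finset.mem_sigma] at hp ⊢
    obtain ⟨hT, hi⟩ := hp
    obtain ⟨hsub, hcard⟩ := Finset.mem_powersetCard.mp hT
    refine ⟨Finset.mem_powersetCard.mpr ⟨(Finset.erase_subset _ _).trans hsub, ?_⟩, ?_⟩
    · rw [Finset.card_erase_of_mem hi, hcard]; omega
    · exact Finset.mem_sdiff.mpr ⟨hsub hi, Finset.notMem_erase _ _⟩
  · rintro ⟨T, i⟩ hp
    rw [Finset.mem_sigma] at hp ⊢
    obtain ⟨hT, hi⟩ := hp
    obtain ⟨hsub, hcard⟩ := Finset.mem_powersetCard.mp hT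
    obtain ⟨hiS, hiT⟩ := Finset.mem_sdiff.mp hi
    refine ⟨Finset.mem_powersetCard.mpr ⟨?_, ?_⟩, Finset.mem_insert_self _ _⟩
    · exact Finset.insert_subset hiS hsub
    · rw [Finset.card_insert_of_notMem hiT, hcard]
  · rintro ⟨T, i⟩ hp
    rw [Finset.mem_sigma] at hp
    simp only [Sigma.mk.inj_iff, heq_eq_eq, and_true]
    exact Finset.insert_erase hp.2
  · rintro ⟨T, i⟩ hp
    rw [Finset.mem_sigma] at hp
    simp only [Sigma.mk.inj_iff, heq_eq_eq, and_true]
    exact Finset.erase_insert (Finset.mem_sdiff.mp hp.2).2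
  · rintro ⟨T, i⟩ _
    rfl

lemma sigS_self (S : Finset (Fin n)) :
    sigS r S S.card = ∏ i ∈ S, (X + C (r i)) := by
  unfold sigS
  rw [Finset.powersetCard_self, Finset.sum_singleton]

lemma iter_deriv_sigS (S : Finset (Fin n)) (j : ℕ) (hj : j ≤ S.card) :
    derivative^[j] (sigS r S S.card) = Nat.factorial j • sigS r S (S.card - j) := by
  induction j with
  | zero => simp
  | succ j ih =>
    have hj' : j ≤ S.card := by omega
    rw [Function.iterate_succ_apply', ih hj', derivative_smul]
    have h1 : S.card - j = (S.card - (j+1)) + 1 := by omega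
    rw [h1, derivative_sigS]
    have h2 : S.card - (S.card - (j+1)) = j + 1 := by omega
    rw [h2, smul_smul, Nat.factorial_succ, mul_comm]

lemma sigS_split (S : Finset (Fin n)) (i : Fin n) (hi : i ∈ S) (m : ℕ) :
    sigS r S (m + 1) = sigS r (S.erase i) (m + 1) + (X + C (r i)) * sigS r (S.erase i) m := by
  classical
  conv_lhs => rw [← Finset.insert_erase hi]
  unfold sigS
  rw [Finset.powersetCard_succ_insert (Finset.notMem_erase i S)]
  rw [Finset.sum_union]
  · congr 1
    rw [Finset.sum_image, Finset.mul_sum]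
    · refine Finset.sum_congr rfl fun T hT => ?_
      obtain ⟨hsub, _⟩ := Finset.mem_powersetCard.mp hT
      rw [Finset.prod_insert (fun h => Finset.notMem_erase i S (hsub h))]
    · intro T hT T' hT' h
      obtain ⟨hsub, _⟩ := Finset.mem_powersetCard.mp hT
      obtain ⟨hsub', _⟩ := Finset.mem_powersetCard.mp hT'
      have hiT : i ∉ T := fun h' => Finset.notMem_erase i S (hsub h')
      have hiT' : i ∉ T' := fun h' => Finset.notMem_erase i S (hsub' h')
      rw [← Finset.erase_insert hiT, ← Finset.erase_insert hiT', h]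
  · rw [Finset.disjoint_left]
    intro A hA hA'
    obtain ⟨hsub, _⟩ := Finset.mem_powersetCard.mp hA
    obtain ⟨T, hT, rfl⟩ := Finset.mem_image.mp hA'
    exact Finset.notMem_erase i S (hsub (Finset.mem_insert_self _ _))

end Sig

section Part2
open Polynomial

variable {R : Type*} [CommRing R] {n : ℕ} (r : Fin n → R)

lemma sigS_map {S : Type*} [CommRing S] (φ : R →+* S) (T : Finset (Fin n)) (m : ℕ) :
    (sigS r T m).map φ = sigS (fun i => φ (r i)) T m := by
  unfold sigS
  rw [Polynomial.map_sum]
  refine Finset.sum_congr rfl fun A _ => ?_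
  rw [Polynomial.map_prod]
  refine Finset.prod_congr rfl fun i _ => ?_
  rw [Polynomial.map_add, Polynomial.map_X, Polynomial.map_C]

lemma monic_sig_prod [Nontrivial R] (T : Finset (Fin n)) :
    (∏ i ∈ T, (X + C (r i))).Monic ∧ (∏ i ∈ T, (X + C (r i))).natDegree = T.card := by
  constructor
  · exact monic_prod_of_monic _ _ fun i _ => monic_X_add_C (r i)
  · rw [natDegree_prod_of_monic _ _ fun i _ => monic_X_add_C (r i)]
    simp [natDegree_X_add_C]

lemma natDegree_sigS_le [Nontrivial R] (T : Finset (Fin n)) (m : ℕ) :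
    (sigS r T m).natDegree ≤ m := by
  refine natDegree_sum_le_of_forall_le _ _ fun A hA => ?_
  rw [(monic_sig_prod r A).2, (Finset.mem_powersetCard.mp hA).2]

lemma coeff_sigS [Nontrivial R] (T : Finset (Fin n)) (m : ℕ) :
    (sigS r T m).coeff m = (T.card.choose m : R) := by
  unfold sigS
  rw [finset_sum_coeff]
  have h : ∀ A ∈ Finset.powersetCard m T, (∏ i ∈ A, (X + C (r i))).coeff m = 1 := by
    intro A hA
    obtain ⟨hm, hd⟩ := monic_sig_prod r A
    rw [(Finset.mem_powersetCard.mp hA).2] at hd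
    rw [← hd, Monic.coeff_natDegree hm]
  rw [Finset.sum_congr rfl h, Finset.sum_const, Finset.card_powersetCard, nsmul_eq_mul, mul_one]

end Part2

section Part3
open Polynomial

lemma sigmaTP_eq_sigS (n : ℕ) (r : Fin n → ℝ) (m : ℕ) :
    sigmaTP n r m = sigS r Finset.univ m := rfl

lemma sigS_zero {R : Type*} [CommRing R] {n : ℕ} (r : Fin n → R) (T : Finset (Fin n)) :
    sigS r T 0 = 1 := by
  unfold sigS
  rw [Finset.powersetCard_zero, Finset.sum_singleton, Finset.prod_empty]

lemma qPoly_eq (n : ℕ) (r : Fin n → ℝ) (i : Fin n) (k : ℕ) (hk : 1 ≤ k) :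
    qPoly n r i k = sigS r (Finset.univ.erase i) (k - 1) := by
  induction k, hk using Nat.le_induction with
  | base =>
    unfold qPoly
    simp [sigmaTP_eq_sigS, sigS_zero]
  | succ k hk ih =>
    have hstep : qPoly n r i (k + 1) = sigmaTP n r k - (X + C (r i)) * qPoly n r i k := by
      unfold qPoly
      rw [Finset.sum_range_succ']
      simp only [Nat.add_sub_cancel]
      have h0 : ((-1 : ℝ) ^ 0) • (sigmaTP n r (k - 0) * (X + C (r i)) ^ 0) = sigmaTP n r k := by
        simp
      rw [h0]
      have h1 : ∀ j ∈ Finset.range k,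
          ((-1 : ℝ) ^ (j + 1)) • (sigmaTP n r (k - (j + 1)) * (X + C (r i)) ^ (j + 1))
          = -((X + C (r i)) * (((-1 : ℝ) ^ j) • (sigmaTP n r (k - 1 - j) * (X + C (r i)) ^ j))) := by
        intro j hj
        have : k - (j + 1) = k - 1 - j := by omega
        rw [this]
        simp only [smul_eq_C_mul, map_mul, map_pow, map_neg, map_one, pow_succ]
        ring
      rw [Finset.sum_congr rfl h1, Finset.sum_neg_distrib, ← Finset.mul_sum]
      ring
    rw [hstep, ih]
    have hsplit := sigS_split r Finset.univ i (Finset.mem_univ i) (k - 1)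
    have hk1 : k - 1 + 1 = k := by omega
    rw [hk1] at hsplit
    rw [sigmaTP_eq_sigS, hsplit]
    have h3 : k + 1 - 1 = k := by omega
    rw [h3]
    ring

end Part3
section GLsec
open Polynomial Complex

lemma gl_ratio (ρ : ℂ) (M : Multiset ℂ) (w : ℂ)
    (he : (Multiset.map (fun ρ => X - C ρ) M).prod.eval w ≠ 0) (hwρ0 : w - ρ ≠ 0) :
    (derivative ((X - C ρ) * (Multiset.map (fun ρ => X - C ρ) M).prod)).eval w /
      ((X - C ρ) * (Multiset.map (fun ρ => X - C ρ) M).prod).eval w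
    = (w - ρ)⁻¹ + (derivative (Multiset.map (fun ρ => X - C ρ) M).prod).eval w /
        (Multiset.map (fun ρ => X - C ρ) M).prod.eval w := by
  set q := (Multiset.map (fun ρ => X - C ρ) M).prod with hq
  simp only [derivative_mul, derivative_sub, derivative_X, derivative_C, sub_zero, one_mul,
    eval_add, eval_mul, eval_sub, eval_X, eval_C]
  field_simp

lemma gl_aux (M : Multiset ℂ) (hM : ∀ ρ ∈ M, ρ.im ≤ 0) (w : ℂ) (hw : 0 < w.im) :
    (Multiset.map (fun ρ => X - C ρ) M).prod.eval w ≠ 0 ∧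
    ((derivative (Multiset.map (fun ρ => X - C ρ) M).prod).eval w /
      (Multiset.map (fun ρ => X - C ρ) M).prod.eval w).im ≤ 0 := by
  induction M using Multiset.induction_on with
  | empty => simp
  | cons ρ M ih =>
    obtain ⟨he, hr⟩ := ih (fun a ha => hM a (Multiset.mem_cons_of_mem ha))
    have hρ : ρ.im ≤ 0 := hM ρ (Multiset.mem_cons_self ρ M)
    have hwρ : 0 < (w - ρ).im := by
      rw [Complex.sub_im]; linarith
    have hwρ0 : w - ρ ≠ 0 := fun h => by rw [h] at hwρ; simp at hwρ
    have hinv : ((w - ρ)⁻¹).im < 0 := by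
      rw [Complex.inv_im]
      apply div_neg_of_neg_of_pos
      · linarith
      · exact Complex.normSq_pos.mpr hwρ0
    rw [Multiset.map_cons, Multiset.prod_cons]
    constructor
    · have hfac : ((X - C ρ) * (Multiset.map (fun ρ => X - C ρ) M).prod).eval w
          = (w - ρ) * (Multiset.map (fun ρ => X - C ρ) M).prod.eval w := by
        simp [eval_mul]
      rw [hfac]
      exact mul_ne_zero hwρ0 he
    · rw [gl_ratio ρ M w he hwρ0, Complex.add_im]
      linarith

lemma gl_strict (M : Multiset ℂ) (hne : M ≠ 0) (hM : ∀ ρ ∈ M, ρ.im ≤ 0) (w : ℂ)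
    (hw : 0 < w.im) :
    (derivative (Multiset.map (fun ρ => X - C ρ) M).prod).eval w ≠ 0 := by
  obtain ⟨ρ, hρmem⟩ := Multiset.exists_mem_of_ne_zero hne
  obtain ⟨M', rfl⟩ := Multiset.exists_cons_of_mem hρmem
  obtain ⟨he, hr⟩ := gl_aux M' (fun a ha => hM a (Multiset.mem_cons_of_mem ha)) w hw
  have hρ : ρ.im ≤ 0 := hM ρ (Multiset.mem_cons_self ρ M')
  have hwρ : 0 < (w - ρ).im := by rw [Complex.sub_im]; linarith
  have hwρ0 : w - ρ ≠ 0 := fun h => by rw [h] at hwρ; simp at hwρ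
  have hinv : ((w - ρ)⁻¹).im < 0 := by
    rw [Complex.inv_im]
    apply div_neg_of_neg_of_pos
    · linarith
    · exact Complex.normSq_pos.mpr hwρ0
  rw [Multiset.map_cons, Multiset.prod_cons]
  intro hzero
  have := gl_ratio ρ M' w he hwρ0
  rw [hzero, zero_div] at this
  have him : ((0 : ℂ)).im = ((w - ρ)⁻¹ + (derivative (Multiset.map (fun ρ => X - C ρ) M').prod).eval w /
        (Multiset.map (fun ρ => X - C ρ) M').prod.eval w).im := by rw [← this]
  rw [Complex.zero_im, Complex.add_im] at him
  linarith

lemma deriv_ne_on_UHP (q : Polynomial ℂ) (h0 : 0 < q.natDegree)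
    (h : ∀ w : ℂ, 0 < w.im → q.eval w ≠ 0) :
    ∀ w : ℂ, 0 < w.im → (derivative q).eval w ≠ 0 := by
  have hq : q ≠ 0 := fun h' => by simp [h'] at h0
  have hsp : q.Splits := IsAlgClosed.splits q
  have heq := hsp.eq_prod_roots
  intro w hw
  have hroots : ∀ ρ ∈ q.roots, ρ.im ≤ 0 := by
    intro ρ hρ
    by_contra hip
    push_neg at hip
    exact h ρ hip ((mem_roots hq).mp hρ)
  have hcard : q.roots ≠ 0 := by
    intro h0'
    have hc := splits_iff_card_roots.mp hsp
    rw [h0'] at hc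
    simp at hc
    omega
  rw [heq, derivative_mul, derivative_C, zero_mul, zero_add, eval_mul, eval_C]
  exact mul_ne_zero (leadingCoeff_ne_zero.mpr hq) (gl_strict _ hcard hroots w hw)

lemma iter_deriv_ne_on_UHP (q : Polynomial ℂ)
    (h : ∀ w : ℂ, 0 < w.im → q.eval w ≠ 0) :
    ∀ m, m < q.natDegree →
      (derivative^[m] q).natDegree = q.natDegree - m ∧
      (∀ w : ℂ, 0 < w.im → (derivative^[m] q).eval w ≠ 0) := by
  intro m
  induction m with
  | zero => intro _; simpa using h
  | succ m ih =>
    intro hm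
    have hm' : m < q.natDegree := by omega
    obtain ⟨hdeg, hne⟩ := ih hm'
    have hpos : 0 < (derivative^[m] q).natDegree := by omega
    have hdd := Polynomial.degree_derivative_eq _ hpos
    have hnd : (derivative (derivative^[m] q)).natDegree = (derivative^[m] q).natDegree - 1 :=
      natDegree_eq_of_degree_eq_some hdd
    constructor
    · rw [Function.iterate_succ_apply', hnd, hdeg]
      omega
    · rw [Function.iterate_succ_apply']
      exact deriv_ne_on_UHP _ hpos hne

end GLsec
section Arrow
open Polynomial Complex

noncomputable def Hc (n : ℕ) (r x : Fin n → ℝ) (r₀₀ : ℝ) (z : ℂ) : Polynomial ℂ :=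
  C (z + (r₀₀ : ℂ)) * ∏ i : Fin n, (X + C ((r i : ℂ))) -
    ∑ i : Fin n, C (((x i : ℝ) ^ 2 : ℝ) : ℂ) * ∏ j ∈ Finset.univ.erase i, (X + C ((r j : ℂ)))

lemma Hc_eval_ne (n : ℕ) (r x : Fin n → ℝ) (r₀₀ : ℝ) (z w : ℂ)
    (hz : 0 < z.im) (hw : 0 < w.im) : (Hc n r x r₀₀ z).eval w ≠ 0 := by
  classical
  set Q : ℂ := ∏ i : Fin n, (w + (r i : ℂ)) with hQdef
  set Pi : Fin n → ℂ := fun i => ∏ j ∈ Finset.univ.erase i, (w + (r j : ℂ)) with hPidef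
  have hfac : ∀ i : Fin n, w + (r i : ℂ) ≠ 0 := by
    intro i h
    have : (w + (r i : ℂ)).im = 0 := by rw [h]; simp
    rw [Complex.add_im, Complex.ofReal_im, add_zero] at this
    linarith
  have hQ0 : Q ≠ 0 := Finset.prod_ne_zero_iff.mpr fun i _ => hfac i
  have hQsplit : ∀ i : Fin n, Q = (w + (r i : ℂ)) * Pi i := by
    intro i
    rw [hQdef, hPidef, ← Finset.mul_prod_erase _ _ (Finset.mem_univ i)]
  have hEval : (Hc n r x r₀₀ z).eval w
      = (z + (r₀₀ : ℂ)) * Q - ∑ i : Fin n, ((x i : ℝ) ^ 2 : ℝ) * Pi i := by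
    simp only [Hc, eval_sub, eval_mul, eval_C, eval_finset_sum, eval_prod, eval_add, eval_X,
      hQdef, hPidef]
  have hterm : ∀ i : Fin n, (Pi i) * (starRingEnd ℂ) Q
      = ((Complex.normSq (Pi i) : ℝ) : ℂ) * (starRingEnd ℂ) (w + (r i : ℂ)) := by
    intro i
    rw [hQsplit i, map_mul]
    calc Pi i * ((starRingEnd ℂ) (w + (r i : ℂ)) * (starRingEnd ℂ) (Pi i))
        = (Pi i * (starRingEnd ℂ) (Pi i)) * (starRingEnd ℂ) (w + (r i : ℂ)) := by ring
      _ = ((Complex.normSq (Pi i) : ℝ) : ℂ) * (starRingEnd ℂ) (w + (r i : ℂ)) := by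
          rw [Complex.mul_conj]
  have hprod : ((Hc n r x r₀₀ z).eval w * (starRingEnd ℂ) Q).im
      = z.im * Complex.normSq Q + ∑ i : Fin n, (x i) ^ 2 * Complex.normSq (Pi i) * w.im := by
    rw [hEval, sub_mul, Finset.sum_mul]
    have h1 : (z + (r₀₀ : ℂ)) * Q * (starRingEnd ℂ) Q = (z + (r₀₀ : ℂ)) * ((Complex.normSq Q : ℝ) : ℂ) := by
      rw [mul_assoc, Complex.mul_conj]
    have h2 : ∀ i : Fin n, ((x i : ℝ) ^ 2 : ℝ) * Pi i * (starRingEnd ℂ) Q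
        = (((x i ^ 2 * Complex.normSq (Pi i) : ℝ)) : ℂ) * (starRingEnd ℂ) (w + (r i : ℂ)) := by
      intro i
      rw [mul_assoc, hterm i]
      push_cast
      ring
    rw [h1, Finset.sum_congr rfl fun i _ => h2 i, Complex.sub_im, Complex.im_sum]
    have h3 : ((z + (r₀₀ : ℂ)) * ((Complex.normSq Q : ℝ) : ℂ)).im = z.im * Complex.normSq Q := by
      rw [Complex.mul_im]
      simp
    have h4 : ∀ i : Fin n, ((((x i ^ 2 * Complex.normSq (Pi i) : ℝ)) : ℂ) *
        (starRingEnd ℂ) (w + (r i : ℂ))).im = -(x i ^ 2 * Complex.normSq (Pi i) * w.im) := by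
      intro i
      simp [Complex.mul_im, Complex.conj_im, Complex.conj_re, ← Complex.ofReal_pow]
    rw [h3, Finset.sum_congr rfl fun i _ => h4 i, Finset.sum_neg_distrib]
    ring
  intro hE
  rw [hE, zero_mul] at hprod
  have hpos : 0 < z.im * Complex.normSq Q + ∑ i : Fin n, (x i) ^ 2 * Complex.normSq (Pi i) * w.im := by
    have hq : 0 < z.im * Complex.normSq Q :=
      mul_pos hz (Complex.normSq_pos.mpr hQ0)
    have hs : 0 ≤ ∑ i : Fin n, (x i) ^ 2 * Complex.normSq (Pi i) * w.im := by
      refine Finset.sum_nonneg fun i _ => ?_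
      have := Complex.normSq_nonneg (Pi i)
      positivity
    linarith
  rw [Complex.zero_im] at hprod
  linarith

end Arrow

section Main
open Polynomial Complex

lemma natDegree_Hc (n : ℕ) (hn : 1 ≤ n) (r x : Fin n → ℝ) (r₀₀ : ℝ) (z : ℂ) (hz : 0 < z.im) :
    (Hc n r x r₀₀ z).natDegree = n := by
  have hz0 : z + (r₀₀ : ℂ) ≠ 0 := by
    intro h
    have h2 : (z + (r₀₀ : ℂ)).im = 0 := by rw [h]; simp
    rw [Complex.add_im, Complex.ofReal_im, add_zero] at h2
    linarith
  have hA : (C (z + (r₀₀ : ℂ)) * ∏ i : Fin n, (X + C ((r i : ℂ)))).natDegree = n := by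
    rw [natDegree_C_mul hz0]
    have h3 := (monic_sig_prod (fun i => ((r i : ℂ))) Finset.univ).2
    simpa using h3
  have hB : (∑ i : Fin n, C (((x i : ℝ) ^ 2 : ℝ) : ℂ) *
      ∏ j ∈ Finset.univ.erase i, (X + C ((r j : ℂ)))).natDegree ≤ n - 1 := by
    refine natDegree_sum_le_of_forall_le _ _ fun i _ => ?_
    refine natDegree_mul_le.trans ?_
    rw [natDegree_C]
    have h2 := (monic_sig_prod (fun i => ((r i : ℂ))) (Finset.univ.erase i)).2
    rw [Finset.card_erase_of_mem (Finset.mem_univ i)] at h2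
    simp only [Finset.card_univ, Fintype.card_fin] at h2
    omega
  unfold Hc
  rw [natDegree_sub_eq_left_of_natDegree_lt, hA]
  rw [hA]
  omega

lemma pPoly_map (n k : ℕ) (hk1 : 1 ≤ k) (r x : Fin n → ℝ) (r₀₀ : ℝ) :
    (pPoly n k r₀₀ r x).map (algebraMap ℝ ℂ)
      = (X + C ((r₀₀ : ℂ))) * sigS (fun i => ((r i : ℂ))) Finset.univ k
        - ∑ i : Fin n, C (((x i : ℝ) ^ 2 : ℝ) : ℂ) *
            sigS (fun i => ((r i : ℂ))) (Finset.univ.erase i) (k - 1) := by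
  unfold pPoly
  rw [Polynomial.map_sub, Polynomial.map_mul, Polynomial.map_add, Polynomial.map_X,
    Polynomial.map_C, Polynomial.map_sum, sigmaTP_eq_sigS, sigS_map]
  congr 1
  refine Finset.sum_congr rfl fun i _ => ?_
  rw [qPoly_eq n r i k hk1, smul_eq_C_mul, Polynomial.map_mul, Polynomial.map_C, sigS_map]
  simp only [Complex.coe_algebraMap]

lemma eval_iter_deriv_Hc (n k : ℕ) (hn : 1 ≤ n) (hk1 : 1 ≤ k) (hkn : k ≤ n)
    (r x : Fin n → ℝ) (r₀₀ : ℝ) (z : ℂ) :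
    (derivative^[n - k] (Hc n r x r₀₀ z)).eval z
      = ((n - k).factorial : ℂ) * (((pPoly n k r₀₀ r x).map (algebraMap ℝ ℂ)).eval z) := by
  classical
  set rc : Fin n → ℂ := fun i => ((r i : ℂ)) with hrc
  have hcardU : (Finset.univ : Finset (Fin n)).card = n := by simp
  have hcardE : ∀ i : Fin n, (Finset.univ.erase i).card = n - 1 := fun i => by
    rw [Finset.card_erase_of_mem (Finset.mem_univ i), hcardU]
  have hDU : derivative^[n - k] (∏ i : Fin n, (X + C (rc i)))
      = (n - k).factorial • sigS rc Finset.univ k := by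
    rw [← sigS_self rc Finset.univ,
      iter_deriv_sigS rc Finset.univ (n - k) (by rw [hcardU]; omega)]
    have h2 : (Finset.univ : Finset (Fin n)).card - (n - k) = k := by rw [hcardU]; omega
    rw [h2]
  have hDE : ∀ i : Fin n, derivative^[n - k] (∏ j ∈ Finset.univ.erase i, (X + C (rc j)))
      = (n - k).factorial • sigS rc (Finset.univ.erase i) (k - 1) := by
    intro i
    rw [← sigS_self rc (Finset.univ.erase i),
      iter_deriv_sigS rc (Finset.univ.erase i) (n - k) (by rw [hcardE i]; omega)]
    have h2 : (Finset.univ.erase i).card - (n - k) = k - 1 := by rw [hcardE i]; omega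
    rw [h2]
  have hHc : derivative^[n - k] (Hc n r x r₀₀ z)
      = C (z + (r₀₀ : ℂ)) * ((n - k).factorial • sigS rc Finset.univ k)
        - ∑ i : Fin n, C (((x i : ℝ) ^ 2 : ℝ) : ℂ) *
            ((n - k).factorial • sigS rc (Finset.univ.erase i) (k - 1)) := by
    unfold Hc
    rw [iterate_derivative_sub, iterate_derivative_sum, iterate_derivative_C_mul, hDU]
    congr 1
    exact Finset.sum_congr rfl fun i _ => by rw [iterate_derivative_C_mul, hDE i]
  rw [hHc, pPoly_map n k hk1 r x r₀₀]
  simp only [nsmul_eq_mul, eval_sub, eval_mul, eval_add, eval_C, eval_X, eval_finset_sum,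
    eval_natCast]
  rw [mul_sub, Finset.mul_sum]
  congr 1
  · ring
  · exact Finset.sum_congr rfl fun i _ => by ring
end Main


section Final
open Polynomial Complex

/-- `p_{k+1}` has only real roots: it splits over `ℝ`,
with `k+1` real roots counted with multiplicity. -/
theorem pPoly_real_rooted (n k : ℕ) (hn : 1 ≤ n) (hk1 : 1 ≤ k) (hkn : k ≤ n)
    (r₀₀ : ℝ) (r x : Fin n → ℝ) :
    (pPoly n k r₀₀ r x).Splits ∧
      (pPoly n k r₀₀ r x).roots.card = k + 1 := by
  classical
  set p : ℝ[X] := pPoly n k r₀₀ r x with hp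
  have hcardU : (Finset.univ : Finset (Fin n)).card = n := by simp
  -- degree facts
  have hσdeg : (sigmaTP n r k).natDegree ≤ k := by
    rw [sigmaTP_eq_sigS]; exact natDegree_sigS_le r Finset.univ k
  have hσcoeff : (sigmaTP n r k).coeff k = (n.choose k : ℝ) := by
    rw [sigmaTP_eq_sigS]
    have h1 := coeff_sigS r Finset.univ k
    rwa [hcardU] at h1
  have hBdeg : (∑ i : Fin n, ((x i) ^ 2) • qPoly n r i k).natDegree ≤ k - 1 := by
    refine natDegree_sum_le_of_forall_le _ _ fun i _ => (natDegree_smul_le _ _).trans ?_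
    rw [qPoly_eq n r i k hk1]
    exact natDegree_sigS_le r _ _
  have hAco : ((X + C r₀₀) * sigmaTP n r k).coeff (k + 1) = (n.choose k : ℝ) := by
    rw [add_mul, coeff_add, coeff_X_mul, coeff_C_mul, hσcoeff,
      coeff_eq_zero_of_natDegree_lt (by omega : (sigmaTP n r k).natDegree < k + 1),
      mul_zero, add_zero]
  have hpcoeff : p.coeff (k + 1) = (n.choose k : ℝ) := by
    rw [hp]
    unfold pPoly
    rw [coeff_sub, hAco,
      coeff_eq_zero_of_natDegree_lt (by omega : (∑ i : Fin n, ((x i) ^ 2) • qPoly n r i k).natDegree < k + 1),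
      sub_zero]
  have hchoose : (n.choose k : ℝ) ≠ 0 := Nat.cast_ne_zero.mpr (Nat.choose_pos hkn).ne'
  have hpdeg_le : p.natDegree ≤ k + 1 := by
    rw [hp]
    unfold pPoly
    refine (natDegree_sub_le _ _).trans (max_le ?_ ?_)
    · refine natDegree_mul_le.trans ?_
      have : (X + C r₀₀).natDegree ≤ 1 := by
        refine (natDegree_add_le _ _).trans ?_
        simp
      omega
    · omega
  have hpdeg : p.natDegree = k + 1 :=
    le_antisymm hpdeg_le (le_natDegree_of_ne_zero (fun h => hchoose (by rw [← hpcoeff, h])))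
  have hp0 : p ≠ 0 := fun h => by
    rw [h] at hpcoeff
    simp at hpcoeff
    exact hchoose hpcoeff.symm
  -- complex side
  set pc : ℂ[X] := p.map (algebraMap ℝ ℂ) with hpc
  have hpc0 : pc ≠ 0 := by
    rw [hpc, Ne, Polynomial.map_eq_zero_iff (algebraMap ℝ ℂ).injective]
    exact hp0
  have hUHP : ∀ z : ℂ, 0 < z.im → pc.eval z ≠ 0 := by
    intro z hz
    have hdeg : n - k < (Hc n r x r₀₀ z).natDegree := by
      rw [natDegree_Hc n hn r x r₀₀ z hz]; omega
    have hne := (iter_deriv_ne_on_UHP (Hc n r x r₀₀ z)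
      (fun w hw => Hc_eval_ne n r x r₀₀ z w hz hw) (n - k) hdeg).2 z hz
    rw [eval_iter_deriv_Hc n k hn hk1 hkn r x r₀₀ z] at hne
    intro h0
    rw [← hp, ← hpc] at hne
    rw [h0, mul_zero] at hne
    exact hne rfl
  have hallz : ∀ z : ℂ, pc.eval z = 0 → z.im = 0 := by
    intro z h0
    by_contra him
    rcases lt_or_gt_of_ne him with hlt | hgt
    · have hconj : pc.eval (starRingEnd ℂ z) ≠ 0 := by
        refine hUHP _ ?_
        rw [Complex.conj_im]
        linarith
      apply hconj
      have haev : pc.eval (starRingEnd ℂ z) = (aeval (starRingEnd ℂ z)) p := by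
        rw [hpc, eval_map, aeval_def]
      rw [haev, Polynomial.aeval_conj]
      have haev2 : (aeval z) p = pc.eval z := by rw [hpc, eval_map, aeval_def]
      rw [haev2, h0, map_zero]
    · exact hUHP z hgt h0
  have hsp_c : pc.Splits := IsAlgClosed.splits pc
  have hroots_real : ∀ ρ ∈ pc.roots, ((ρ.re : ℝ) : ℂ) = ρ := by
    intro ρ hρ
    have h0 : pc.eval ρ = 0 := (mem_roots hpc0).mp hρ
    have him := hallz ρ h0
    exact Complex.ext (by simp) (by simp [him])
  have heqc := hsp_c.eq_prod_roots
  have hsplits : p.Splits := by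
    rw [splits_iff_exists_multiset]
    refine ⟨pc.roots.map Complex.re, ?_⟩
    apply Polynomial.map_injective (algebraMap ℝ ℂ) (algebraMap ℝ ℂ).injective
    rw [Polynomial.map_mul, Polynomial.map_C, Polynomial.map_multiset_prod,
      Multiset.map_map, Multiset.map_map, ← hpc]
    conv_lhs => rw [heqc]
    congr 1
    · rw [leadingCoeff_map_of_injective (algebraMap ℝ ℂ).injective]
    · refine congrArg Multiset.prod ?_
      refine (Multiset.map_congr rfl fun ρ hρ => ?_)
      simp only [Function.comp_apply, Polynomial.map_sub, Polynomial.map_X, Polynomial.map_C,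
        Complex.coe_algebraMap]
      rw [hroots_real ρ hρ]
  refine ⟨hsplits, ?_⟩
  rw [splits_iff_card_roots.mp hsplits, hpdeg]

end Final
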